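/- arXiv:1409.6551 — 4 statements merged into one kernel-verified Lean document; each statement's English description precedes it below -/
import Mathlib

section
/- Let G=(V,E) be a directed graph with edge lengths, (u,v) a node pair, and L a bound. Suppose C is a u-v-stretching cut, and let T be a shortest-path out-tree rooted at u in the graph H_C := (V_{uv}, E_{uv} ∖ C), where V_{uv} and E_{uv} are the nodes and edges lying on some u-v path of length at most L. Let ℓ̄_T(w) be the distance from u to w in T (∞ if unreachable). Then C = { wx ∈ E_{uv} : ℓ̄_T(w) + ℓ(wx) < ℓ̄_T(x) }; in particular, C is uniquely determined by T. -/
open scoped Classical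

/-- `hasPath E u v p`: the vertex list `u :: p` is a walk from `u` to `v`
using only edges from `E`. -/
def hasPath {V : Type*} (E : Set (V × V)) (u v : V) (p : List V) : Prop :=
  List.Chain (fun a b => (a, b) ∈ E) u p ∧
    (u :: p).getLast (List.cons_ne_nil _ _) = v

/-- The length (w.r.t. edge lengths `ℓ`) of the walk `u :: p`. -/
def pathLen {V : Type*} (ℓ : V × V → ℕ) (u : V) (p : List V) : ℕ :=
  (((u :: p).zip p).map ℓ).sum

/-- `C` is a `u`-`v`-stretching cut. -/
def IsStretchingCut {V : Type*} (E : Set (V × V)) (ℓ : V × V → ℕ) (L : ℕ)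
    (u v : V) (C : Set (V × V)) : Prop :=
  C ⊆ E ∧
    (¬ ∃ p : List V, hasPath (E \ C) u v p ∧ pathLen ℓ u p ≤ L) ∧
    (∀ C' ⊂ C, ∃ p : List V, hasPath (E \ C') u v p ∧ pathLen ℓ u p ≤ L)

/-- `Euv E ℓ L u v`: the set of edges lying on some `u`-`v` path of length at most `L`. -/
def Euv {V : Type*} (E : Set (V × V)) (ℓ : V × V → ℕ) (L : ℕ) (u v : V) :
    Set (V × V) :=
  {e | ∃ p : List V, hasPath E u v p ∧ pathLen ℓ u p ≤ L ∧ e ∈ (u :: p).zip p}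

/-- Shortest-path distance from `u` to `w` using edges of `E` (`⊤` if unreachable);
this equals the distance `ℓ̄_T(w)` in a shortest-path out-tree `T` rooted at `u`. -/
noncomputable def sdist {V : Type*} (E : Set (V × V)) (ℓ : V × V → ℕ)
    (u w : V) : ℕ∞ :=
  ⨅ (p : List V) (_ : hasPath E u w p), (pathLen ℓ u p : ℕ∞)

namespace StretchingAux

variable {V : Type*} {S T : Set (V × V)} {ℓ : V × V → ℕ} {u v w a : V} {p q : List V}

theorem hasPath_nil : hasPath S u v [] ↔ u = v := by
  simp [hasPath, List.Chain]

theorem hasPath_cons : hasPath S u v (a :: p) ↔ (u, a) ∈ S ∧ hasPath S a v p := by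
  simp [hasPath, List.Chain, List.chain_cons, List.getLast_cons, and_assoc]

theorem pathLen_nil : pathLen ℓ u [] = 0 := rfl

theorem pathLen_cons : pathLen ℓ u (a :: p) = ℓ (u, a) + pathLen ℓ a p := by
  simp [pathLen]

theorem edges_cons : ((u :: a :: p).zip (a :: p)) = (u, a) :: ((a :: p).zip p) := rfl

theorem mem_edges {f : V × V} :
    ∀ {p : List V} {u : V}, hasPath S u v p → f ∈ (u :: p).zip p → f ∈ S := by
  intro p
  induction p with
  | nil => intro u _ hf; simp at hf
  | cons b q ih =>
    intro u hp hf
    rw [hasPath_cons] at hp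
    rw [edges_cons, List.mem_cons] at hf
    rcases hf with rfl | hf
    · exact hp.1
    · exact ih hp.2 hf

theorem hasPath_transfer :
    ∀ {p : List V} {u : V}, hasPath S u v p →
      (∀ f ∈ (u :: p).zip p, f ∈ T) → hasPath T u v p := by
  intro p
  induction p with
  | nil => intro u hp _; exact hasPath_nil.mpr (hasPath_nil.mp hp)
  | cons b q ih =>
    intro u hp hsub
    rw [hasPath_cons] at hp ⊢
    refine ⟨hsub _ (by rw [edges_cons]; exact List.mem_cons_self), ih hp.2 ?_⟩
    intro f hf
    exact hsub f (by rw [edges_cons]; exact List.mem_cons_of_mem _ hf)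

theorem hasPath_mono (hST : S ⊆ T) (hp : hasPath S u v p) : hasPath T u v p :=
  hasPath_transfer hp fun f hf => hST (mem_edges hp hf)

theorem hasPath_append :
    ∀ {p : List V} {u : V}, hasPath S u w p → hasPath S w v q →
      hasPath S u v (p ++ q) ∧
      pathLen ℓ u (p ++ q) = pathLen ℓ u p + pathLen ℓ w q ∧
      ((u :: (p ++ q)).zip (p ++ q)) = ((u :: p).zip p) ++ ((w :: q).zip q) := by
  intro p
  induction p with
  | nil =>
    intro u hp hq
    obtain rfl : u = w := hasPath_nil.mp hp
    simpa [pathLen_nil] using hq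
  | cons b r ih =>
    intro u hp hq
    rw [hasPath_cons] at hp
    obtain ⟨h1, h2, h3⟩ := ih hp.2 hq
    refine ⟨hasPath_cons.mpr ⟨hp.1, h1⟩, ?_, ?_⟩
    · simp only [List.cons_append, pathLen_cons] at *
      omega
    · simp only [List.cons_append, edges_cons, h3]


theorem sdist_le (hp : hasPath S u w p) : sdist S ℓ u w ≤ (pathLen ℓ u p : ℕ∞) :=
  iInf₂_le p hp

theorem exists_path_of_sdist_le {n : ℕ} (h : sdist S ℓ u w ≤ (n : ℕ∞)) :
    ∃ p, hasPath S u w p ∧ pathLen ℓ u p ≤ n := by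
  by_contra hc
  push_neg at hc
  have h2 : ((n : ℕ∞) + 1) ≤ sdist S ℓ u w := by
    refine le_iInf₂ fun p hp => ?_
    have := hc p hp
    exact_mod_cast Nat.succ_le_of_lt this
  have h3 := h2.trans h
  have : (n : ℕ∞) < (n : ℕ∞) + 1 := by
    exact_mod_cast Nat.lt_succ_self n
  exact absurd h3 (not_le.mpr this)

theorem sdist_triangle {b : V} (hab : (a, b) ∈ S) :
    sdist S ℓ u b ≤ sdist S ℓ u a + (ℓ (a, b) : ℕ∞) := by
  rcases eq_or_ne (sdist S ℓ u a) ⊤ with h | h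
  · simp [h]
  · lift sdist S ℓ u a to ℕ using h with m hm
    obtain ⟨p, hp, hlen⟩ := exists_path_of_sdist_le (le_of_eq hm.symm)
    have hb : hasPath S a b [b] := hasPath_cons.mpr ⟨hab, hasPath_nil.mpr rfl⟩
    obtain ⟨h1, h2, -⟩ := hasPath_append (ℓ := ℓ) hp hb
    calc sdist S ℓ u b ≤ (pathLen ℓ u (p ++ [b]) : ℕ∞) := sdist_le h1
      _ = ((pathLen ℓ u p + ℓ (a, b) : ℕ) : ℕ∞) := by
            rw [h2, pathLen_cons, pathLen_nil]; push_cast; ring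
      _ ≤ (m : ℕ∞) + (ℓ (a, b) : ℕ∞) := by
            push_cast; exact add_le_add_left (by exact_mod_cast hlen) _

theorem decompose {e : V × V} :
    ∀ {p : List V} {u : V}, hasPath S u v p → e ∈ (u :: p).zip p →
      ∃ a b, p = a ++ e.2 :: b ∧ hasPath S u e.1 a ∧ hasPath S e.2 v b ∧
        e ∉ (u :: a).zip a ∧
        ((u :: p).zip p) = ((u :: a).zip a) ++ e :: ((e.2 :: b).zip b) := by
  intro p
  induction p with
  | nil => intro u _ hf; simp at hf
  | cons y q ih =>
    intro u hp hf
    rw [hasPath_cons] at hp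
    rw [edges_cons, List.mem_cons] at hf
    by_cases hey : e = (u, y)
    · subst hey
      exact ⟨[], q, rfl, hasPath_nil.mpr rfl, hp.2, by simp, by simp [edges_cons]⟩
    · rcases hf with h | hf
      · exact absurd h hey
      · obtain ⟨a', b', rfl, ha, hb, hna, hzip⟩ := ih hp.2 hf
        refine ⟨y :: a', b', rfl, hasPath_cons.mpr ⟨hp.1, ha⟩, hb, ?_, ?_⟩
        · rw [edges_cons, List.mem_cons]
          rintro (h | h)
          · exact hey h
          · exact hna h
        · rw [edges_cons, hzip, edges_cons]
          simp


theorem Euv_subset {E : Set (V × V)} {L : ℕ} : Euv E ℓ L u v ⊆ E := by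
  rintro f ⟨p, hp, -, hf⟩
  exact mem_edges hp hf

end StretchingAux

open StretchingAux in
/-- A `u`-`v`-stretching cut `C` is exactly the set of edges `wx ∈ E_{uv}` with
`ℓ̄_T(w) + ℓ(wx) < ℓ̄_T(x)`, where `ℓ̄_T` is the shortest-path distance from `u` in
`H_C = (V_{uv}, E_{uv} \ C)`; in particular, `C` is uniquely determined by `T`. -/
theorem stretching_cut_determined_by_tree {V : Type*} [Fintype V]
    (E : Set (V × V)) (ℓ : V × V → ℕ) (L : ℕ) (u v : V)
    (C : Set (V × V)) (hC : IsStretchingCut E ℓ L u v C) :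
    C = {e : V × V | e ∈ Euv E ℓ L u v ∧
      sdist (Euv E ℓ L u v \ C) ℓ u e.1 + (ℓ e : ℕ∞) <
        sdist (Euv E ℓ L u v \ C) ℓ u e.2} := by
  classical
  obtain ⟨hCE, hcut, hmin⟩ := hC
  set D := Euv E ℓ L u v \ C with hD
  have hDS' : ∀ e : V × V, D ⊆ E \ (C \ {e}) := by
    rintro e f ⟨hf1, hf2⟩
    exact ⟨Euv_subset hf1, fun hfc => hf2 hfc.1⟩
  ext e
  simp only [Set.mem_setOf_eq]
  constructor
  · intro heC
    set S := E \ (C \ {e}) with hS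
    have hSE : S ⊆ E := Set.diff_subset
    have hssub : C \ {e} ⊂ C := by
      constructor
      · exact Set.diff_subset
      · intro hsub
        exact (hsub heC).2 rfl
    obtain ⟨p0, hp0, hp0L⟩ := hmin _ hssub
    have hedge : ∀ {p : List V}, hasPath S u v p → pathLen ℓ u p ≤ L →
        ∀ f ∈ (u :: p).zip p, f ∈ Euv E ℓ L u v := by
      intro p hp hpL f hf
      exact ⟨p, hasPath_mono hSE hp, hpL, hf⟩
    have huse : ∀ {p : List V}, hasPath S u v p → pathLen ℓ u p ≤ L →
        e ∉ (u :: p).zip p → False := by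
      intro p hp hpL hne
      refine hcut ⟨p, hasPath_transfer hp ?_, hpL⟩
      intro f hf
      have hfs := mem_edges hp hf
      exact ⟨hfs.1, fun hfC => hfs.2 ⟨hfC, fun he' => hne (he' ▸ hf)⟩⟩
    have he0 : e ∈ (u :: p0).zip p0 := by
      by_contra hne
      exact huse hp0 hp0L hne
    refine ⟨hedge hp0 hp0L e he0, ?_⟩
    by_contra hlt
    push_neg at hlt
    have heD : e ∉ D := fun hd => hd.2 heC
    have M : ∀ n (p : List V), List.count e ((u :: p).zip p) ≤ n →
        hasPath S u v p → pathLen ℓ u p ≤ L → False := by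
      intro n
      induction n with
      | zero =>
        intro p hcount hp hpL
        exact huse hp hpL (List.count_eq_zero.mp (Nat.le_zero.mp hcount))
      | succ n ih =>
        intro p hcount hp hpL
        by_cases hmem : e ∈ (u :: p).zip p
        · obtain ⟨a, b, rfl, ha, hb, hna, hzip⟩ := decompose hp hmem
          have haD : ∀ f ∈ (u :: a).zip a, f ∈ D := by
            intro f hf
            have hfp : f ∈ (u :: (a ++ e.2 :: b)).zip (a ++ e.2 :: b) := by
              rw [hzip]; exact List.mem_append_left _ hf
            refine ⟨hedge hp hpL f hfp, ?_⟩
            have hfs := mem_edges ha hf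
            intro hfC
            exact hfs.2 ⟨hfC, fun h => hna (h ▸ hf)⟩
          have haD' : hasPath D u e.1 a := hasPath_transfer ha haD
          have h1 : sdist D ℓ u e.1 ≤ (pathLen ℓ u a : ℕ∞) := sdist_le haD'
          have h2 : sdist D ℓ u e.2 ≤ ((pathLen ℓ u a + ℓ e : ℕ) : ℕ∞) := by
            push_cast
            exact hlt.trans (add_le_add_left h1 _)
          obtain ⟨q, hq, hqlen⟩ := exists_path_of_sdist_le h2
          have hqS : hasPath S u e.2 q := hasPath_mono (hDS' e) hq
          obtain ⟨hr, hrlen, hrzip⟩ := hasPath_append (ℓ := ℓ) hqS hb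
          have hplen : pathLen ℓ u (a ++ e.2 :: b) =
              pathLen ℓ u a + (ℓ e + pathLen ℓ e.2 b) := by
            simp only [pathLen, hzip, List.map_append, List.sum_append,
              List.map_cons, List.sum_cons]
          have hrL : pathLen ℓ u (q ++ b) ≤ L := by
            rw [hrlen]
            rw [hplen] at hpL
            omega
          have hqzero : List.count e ((u :: q).zip q) = 0 := by
            refine List.count_eq_zero.mpr fun hmem' => heD (mem_edges hq hmem')
          have hazero : List.count e ((u :: a).zip a) = 0 :=
            List.count_eq_zero.mpr hna
          have hrcount : List.count e ((u :: (q ++ b)).zip (q ++ b)) ≤ n := by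
            rw [hrzip, List.count_append, hqzero]
            have : List.count e ((u :: (a ++ e.2 :: b)).zip (a ++ e.2 :: b)) =
                List.count e ((e.2 :: b).zip b) + 1 := by
              rw [hzip, List.count_append, hazero, List.count_cons_self]
              omega
            omega
          exact ih (q ++ b) hrcount hr hrL
        · exact huse hp hpL hmem
    exact M _ p0 le_rfl hp0 hp0L
  · rintro ⟨heEuv, hlt⟩
    by_contra heC
    have heD : e ∈ D := ⟨heEuv, heC⟩
    have htri := sdist_triangle (ℓ := ℓ) (u := u) (a := e.1) (b := e.2)
      (by simpa using heD)
    exact absurd hlt (not_lt.mpr htri)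
end

section
/- Let (u,v) be a thin pair, i.e., the set V_{uv} of nodes lying on some u-v path of length at most L has size at most √n. Then the number of distinct u-v-stretching cuts is at most (√n)^(√n). -/
/-- `Vuv E ℓ L u v`: the set of nodes lying on some `u`-`v` path of length at most `L`. -/
def Vuv {V : Type*} (E : Set (V × V)) (ℓ : V × V → ℕ) (L : ℕ) (u v : V) :
    Set V :=
  {w | ∃ p : List V, hasPath E u v p ∧ pathLen ℓ u p ≤ L ∧ w ∈ u :: p}

namespace StretchAux

variable {V : Type*}

lemma hasPath_nil {A : Set (V × V)} {u z : V} : hasPath A u z [] ↔ u = z := by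
  simp [hasPath, List.Chain]

lemma hasPath_cons {A : Set (V × V)} {u b z : V} {p : List V} :
    hasPath A u z (b :: p) ↔ (u, b) ∈ A ∧ hasPath A b z p := by
  simp only [hasPath, List.Chain, List.chain_cons, List.getLast_cons (List.cons_ne_nil b p)]
  tauto

lemma pathLen_nil (ℓ : V × V → ℕ) (u : V) : pathLen ℓ u [] = 0 := rfl

lemma pathLen_cons (ℓ : V × V → ℕ) (u b : V) (p : List V) :
    pathLen ℓ u (b :: p) = ℓ (u, b) + pathLen ℓ b p := by
  simp [pathLen, List.zip_cons_cons]

lemma hasPath_self {A : Set (V × V)} (u : V) : hasPath A u u [] := hasPath_nil.mpr rfl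

lemma hasPath_mono {A B : Set (V × V)} (h : A ⊆ B) {u z : V} {p : List V}
    (hp : hasPath A u z p) : hasPath B u z p := by
  induction p generalizing u with
  | nil => exact hasPath_nil.mpr (hasPath_nil.mp hp)
  | cons b q ih =>
    rcases hasPath_cons.mp hp with ⟨he, hq⟩
    exact hasPath_cons.mpr ⟨h he, ih hq⟩

lemma hasPath_edges {A : Set (V × V)} {u z : V} {p : List V}
    (hp : hasPath A u z p) : ∀ pr ∈ (u :: p).zip p, pr ∈ A := by
  induction p generalizing u with
  | nil => simp
  | cons b q ih =>
    rcases hasPath_cons.mp hp with ⟨he, hq⟩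
    intro pr hpr
    rw [List.zip_cons_cons, List.mem_cons] at hpr
    rcases hpr with h | h
    · exact h ▸ he
    · exact ih hq pr h

lemma hasPath_of_edges {A B : Set (V × V)} {u z : V} {p : List V}
    (hp : hasPath A u z p) (h : ∀ pr ∈ (u :: p).zip p, pr ∈ B) : hasPath B u z p := by
  induction p generalizing u with
  | nil => exact hasPath_nil.mpr (hasPath_nil.mp hp)
  | cons b q ih =>
    rcases hasPath_cons.mp hp with ⟨he, hq⟩
    refine hasPath_cons.mpr ⟨h _ (by simp [List.zip_cons_cons]), ih hq ?_⟩
    intro pr hpr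
    exact h pr (by rw [List.zip_cons_cons]; exact List.mem_cons_of_mem _ hpr)

lemma hasPath_append {A : Set (V × V)} {ℓ : V × V → ℕ} {u a z : V} {p q : List V}
    (hp : hasPath A u a p) (hq : hasPath A a z q) :
    hasPath A u z (p ++ q) ∧ pathLen ℓ u (p ++ q) = pathLen ℓ u p + pathLen ℓ a q := by
  induction p generalizing u with
  | nil =>
    rcases hasPath_nil.mp hp with rfl
    simp [pathLen_nil, hq]
  | cons b r ih =>
    rcases hasPath_cons.mp hp with ⟨he, hr⟩
    rcases ih hr with ⟨h1, h2⟩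
    refine ⟨hasPath_cons.mpr ⟨he, h1⟩, ?_⟩
    simp [pathLen_cons, h2, Nat.add_assoc]

lemma hasPath_snoc {A : Set (V × V)} {ℓ : V × V → ℕ} {u a b : V} {p : List V}
    (hp : hasPath A u a p) (he : (a, b) ∈ A) :
    hasPath A u b (p ++ [b]) ∧ pathLen ℓ u (p ++ [b]) = pathLen ℓ u p + ℓ (a, b) := by
  have hb : hasPath A a b [b] := hasPath_cons.mpr ⟨he, hasPath_self b⟩
  have := hasPath_append (ℓ := ℓ) hp hb
  simpa [pathLen_cons, pathLen_nil] using this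

lemma last_edge {A : Set (V × V)} {ℓ : V × V → ℕ} {u w : V} {p : List V}
    (hp : hasPath A u w p) (hne : p ≠ []) :
    ∃ a q, p = q ++ [w] ∧ hasPath A u a q ∧ (a, w) ∈ A ∧
      pathLen ℓ u p = pathLen ℓ u q + ℓ (a, w) := by
  induction p generalizing u with
  | nil => exact absurd rfl hne
  | cons b r ih =>
    rcases hasPath_cons.mp hp with ⟨he, hr⟩
    rcases eq_or_ne r [] with rfl | hr0
    · rcases hasPath_nil.mp hr with rfl
      exact ⟨u, [], rfl, hasPath_self u, he, by simp [pathLen_cons, pathLen_nil]⟩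
    · rcases ih hr hr0 with ⟨a, q, hq1, hq2, hq3, hq4⟩
      refine ⟨a, b :: q, by simp [hq1], hasPath_cons.mpr ⟨he, hq2⟩, hq3, ?_⟩
      rw [hq1] at hq4
      simp [pathLen_cons, hq1, hq4, Nat.add_assoc]

lemma split_first {A : Set (V × V)} {ℓ : V × V → ℕ} {e : V × V} {z : V} :
    ∀ (p : List V) (w : V), hasPath (A ∪ {e}) w z p →
      hasPath A w z p ∨
      ∃ q r, hasPath A w e.1 q ∧ hasPath (A ∪ {e}) e.2 z r ∧
        pathLen ℓ w q + ℓ e + pathLen ℓ e.2 r ≤ pathLen ℓ w p ∧ r.length < p.length := by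
  intro p
  induction p with
  | nil =>
    intro w hp
    exact Or.inl (hasPath_nil.mpr (hasPath_nil.mp hp))
  | cons b p' ih =>
    intro w hp
    rcases hasPath_cons.mp hp with ⟨he, hp'⟩
    rcases he with he | he
    · rcases ih b hp' with h | ⟨q, r, h1, h2, h3, h4⟩
      · exact Or.inl (hasPath_cons.mpr ⟨he, h⟩)
      · refine Or.inr ⟨b :: q, r, hasPath_cons.mpr ⟨he, h1⟩, h2, ?_, Nat.lt_succ_of_lt h4⟩
        rw [pathLen_cons, pathLen_cons]
        omega
    · rcases Set.mem_singleton_iff.mp he with rfl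
      refine Or.inr ⟨[], p', hasPath_nil.mpr rfl, hp', ?_, Nat.lt_succ_self _⟩
      simp [pathLen_cons, pathLen_nil]

lemma purge {A : Set (V × V)} {ℓ : V × V → ℕ} {e : V × V} {z : V} :
    ∀ (p : List V), hasPath (A ∪ {e}) e.2 z p →
      ∃ r, hasPath A e.2 z r ∧ pathLen ℓ e.2 r ≤ pathLen ℓ e.2 p := by
  suffices h : ∀ (n : ℕ) (p : List V), p.length ≤ n → hasPath (A ∪ {e}) e.2 z p →
      ∃ r, hasPath A e.2 z r ∧ pathLen ℓ e.2 r ≤ pathLen ℓ e.2 p by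
    exact fun p => h p.length p le_rfl
  intro n
  induction n with
  | zero =>
    intro p hl hp
    rw [List.length_eq_zero_iff.mp (Nat.le_zero.mp hl)] at hp ⊢
    exact ⟨[], hp |> fun h => hasPath_nil.mpr (hasPath_nil.mp h), le_rfl⟩
  | succ n ih =>
    intro p hl hp
    rcases split_first (ℓ := ℓ) p e.2 hp with h | ⟨q, r, _, h2, h3, h4⟩
    · exact ⟨p, h, le_refl _⟩
    · rcases ih r (by omega) h2 with ⟨r', hr1, hr2⟩
      exact ⟨r', hr1, by omega⟩

end StretchAux

namespace StretchAux2
open StretchAux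

variable {V : Type*} (E : Set (V × V)) (ℓ : V × V → ℕ) (L : ℕ) (u v : V)

/-- residual graph restricted to `Vuv`. -/
def Hs (C : Set (V × V)) : Set (V × V) :=
  {e | e ∈ E ∧ e ∉ C ∧ e.1 ∈ Vuv E ℓ L u v ∧ e.2 ∈ Vuv E ℓ L u v}

def Rch (C : Set (V × V)) (w : V) : Prop := ∃ p, hasPath (Hs E ℓ L u v C) u w p

noncomputable def dN (C : Set (V × V)) (w : V) : ℕ :=
  sInf {t | ∃ p, hasPath (Hs E ℓ L u v C) u w p ∧ pathLen ℓ u p = t}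

noncomputable def mN (C : Set (V × V)) (w : V) : ℕ :=
  sInf {c | ∃ p, hasPath (Hs E ℓ L u v C) u w p ∧ pathLen ℓ u p = dN E ℓ L u v C w ∧
    p.length = c}

variable {E ℓ L u v}

lemma dN_le {C : Set (V × V)} {w : V} {p : List V} (hp : hasPath (Hs E ℓ L u v C) u w p) :
    dN E ℓ L u v C w ≤ pathLen ℓ u p :=
  Nat.sInf_le ⟨p, hp, rfl⟩

lemma exists_opt {C : Set (V × V)} {w : V} (h : Rch E ℓ L u v C w) :
    ∃ p, hasPath (Hs E ℓ L u v C) u w p ∧ pathLen ℓ u p = dN E ℓ L u v C w ∧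
      p.length = mN E ℓ L u v C w := by
  rcases h with ⟨p, hp⟩
  have h1 : {t | ∃ p, hasPath (Hs E ℓ L u v C) u w p ∧ pathLen ℓ u p = t}.Nonempty :=
    ⟨_, p, hp, rfl⟩
  rcases Nat.sInf_mem h1 with ⟨q, hq, hqd⟩
  have h2 : {c | ∃ p, hasPath (Hs E ℓ L u v C) u w p ∧
      pathLen ℓ u p = dN E ℓ L u v C w ∧ p.length = c}.Nonempty := ⟨_, q, hq, hqd, rfl⟩
  rcases Nat.sInf_mem h2 with ⟨r, hr1, hr2, hr3⟩
  exact ⟨r, hr1, hr2, hr3⟩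

lemma mN_le {C : Set (V × V)} {w : V} {p : List V} (hp : hasPath (Hs E ℓ L u v C) u w p)
    (hd : pathLen ℓ u p = dN E ℓ L u v C w) :
    mN E ℓ L u v C w ≤ p.length :=
  Nat.sInf_le ⟨p, hp, hd, rfl⟩

lemma dN_u (C : Set (V × V)) : dN E ℓ L u v C u = 0 :=
  Nat.le_zero.mp (dN_le (hasPath_self u))

lemma par_spec_exists {C : Set (V × V)} {w : V} (h : Rch E ℓ L u v C w) (hw : w ≠ u) :
    ∃ a, (a, w) ∈ Hs E ℓ L u v C ∧ Rch E ℓ L u v C a ∧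
      dN E ℓ L u v C w = dN E ℓ L u v C a + ℓ (a, w) ∧
      mN E ℓ L u v C a < mN E ℓ L u v C w := by
  rcases exists_opt h with ⟨p, hp, hd, hm⟩
  have hne : p ≠ [] := by
    rintro rfl
    exact hw (hasPath_nil.mp hp).symm
  rcases last_edge (ℓ := ℓ) hp hne with ⟨a, q, hpq, hq, hedge, hlen⟩
  have hda : dN E ℓ L u v C a = pathLen ℓ u q := by
    refine le_antisymm (dN_le hq) ?_
    by_contra hlt
    push_neg at hlt
    rcases exists_opt ⟨q, hq⟩ with ⟨q', hq', hdq', _⟩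
    rcases hasPath_snoc (ℓ := ℓ) hq' hedge with ⟨hq'w, hq'len⟩
    have := dN_le hq'w
    omega
  have hmn : mN E ℓ L u v C a ≤ q.length := mN_le hq hda.symm
  have hql : q.length < p.length := by rw [hpq]; simp
  exact ⟨a, hedge, ⟨q, hq⟩, by omega, by omega⟩

open Classical in
noncomputable def par (C : Set (V × V)) (w : V) : V :=
  if h : Rch E ℓ L u v C w ∧ w ≠ u then Classical.choose (par_spec_exists h.1 h.2) else w

lemma par_spec {C : Set (V × V)} {w : V} (h : Rch E ℓ L u v C w) (hw : w ≠ u) :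
    (par (E := E) (ℓ := ℓ) (L := L) (u := u) (v := v) C w, w) ∈ Hs E ℓ L u v C ∧
      Rch E ℓ L u v C (par (E := E) (ℓ := ℓ) (L := L) (u := u) (v := v) C w) ∧
      dN E ℓ L u v C w =
        dN E ℓ L u v C (par (E := E) (ℓ := ℓ) (L := L) (u := u) (v := v) C w) +
          ℓ (par (E := E) (ℓ := ℓ) (L := L) (u := u) (v := v) C w, w) ∧
      mN E ℓ L u v C (par (E := E) (ℓ := ℓ) (L := L) (u := u) (v := v) C w) <
        mN E ℓ L u v C w := by
  rw [par, dif_pos ⟨h, hw⟩]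
  exact Classical.choose_spec (par_spec_exists h hw)

lemma par_eq_self_iff {C : Set (V × V)} {w : V} :
    par (E := E) (ℓ := ℓ) (L := L) (u := u) (v := v) C w = w ↔
      ¬(Rch E ℓ L u v C w ∧ w ≠ u) := by
  constructor
  · intro hpw hcon
    have := (par_spec hcon.1 hcon.2).2.2.2
    rw [hpw] at this
    omega
  · intro h
    rw [par, dif_neg h]

lemma par_mem {C : Set (V × V)} {w : V} (hw : w ∈ Vuv E ℓ L u v) :
    par (E := E) (ℓ := ℓ) (L := L) (u := u) (v := v) C w ∈ Vuv E ℓ L u v := by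
  by_cases h : Rch E ℓ L u v C w ∧ w ≠ u
  · exact (par_spec h.1 h.2).1.2.2.1
  · rw [par, dif_neg h]; exact hw

end StretchAux2


namespace StretchAux2
open StretchAux

variable {V : Type*} {E : Set (V × V)} {ℓ : V × V → ℕ} {L : ℕ} {u v : V}

lemma Hs_subset {C : Set (V × V)} : Hs E ℓ L u v C ⊆ E \ C :=
  fun e he => ⟨he.1, he.2.1⟩

lemma fact3 {C : Set (V × V)} (hC : IsStretchingCut E ℓ L u v C) {e : V × V}
    (he : e ∈ C) :
    e.1 ∈ Vuv E ℓ L u v ∧ e.2 ∈ Vuv E ℓ L u v ∧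
    ∃ q r, hasPath (Hs E ℓ L u v C) u e.1 q ∧ hasPath (Hs E ℓ L u v C) e.2 v r ∧
      pathLen ℓ u q + ℓ e + pathLen ℓ e.2 r ≤ L := by
  have hsub : C \ {e} ⊂ C := by
    refine ⟨Set.diff_subset, fun hs => ?_⟩
    have := hs he
    simp at this
  rcases hC.2.2 _ hsub with ⟨P, hP, hPL⟩
  -- the walk P lies in E
  have hPE : hasPath E u v P := hasPath_mono Set.diff_subset hP
  -- all nodes of P are in Vuv
  have hnodes : ∀ w ∈ u :: P, w ∈ Vuv E ℓ L u v := fun w hw => ⟨P, hPE, hPL, hw⟩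
  -- P must use the edge e
  have huse : ∃ pr ∈ (u :: P).zip P, pr = e := by
    by_contra hno
    push_neg at hno
    refine hC.2.1 ⟨P, hasPath_of_edges hP ?_, hPL⟩
    intro pr hpr
    have h1 := hasPath_edges hP pr hpr
    have h2 := hno pr hpr
    exact ⟨h1.1, fun hc => h1.2 ⟨hc, h2⟩⟩
  rcases huse with ⟨pr, hpr, rfl⟩
  rcases List.of_mem_zip hpr with ⟨h1, h2⟩
  have he1 : pr.1 ∈ Vuv E ℓ L u v := hnodes _ h1
  have he2 : pr.2 ∈ Vuv E ℓ L u v := hnodes _ (List.mem_cons_of_mem _ h2)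
  refine ⟨he1, he2, ?_⟩
  -- P is a walk in Hs ∪ {pr}
  have hP' : hasPath (Hs E ℓ L u v C ∪ {pr}) u v P := by
    refine hasPath_of_edges hP ?_
    intro pr' hpr'
    have h1 := hasPath_edges hP pr' hpr'
    by_cases hc : pr' = pr
    · exact Or.inr (by simp [hc])
    · refine Or.inl ⟨h1.1, fun hcc => h1.2 ⟨hcc, hc⟩, ?_, ?_⟩
      · rcases List.of_mem_zip hpr' with ⟨g1, _⟩
        exact hnodes _ g1
      · rcases List.of_mem_zip hpr' with ⟨_, g2⟩
        exact hnodes _ (List.mem_cons_of_mem _ g2)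
  rcases split_first (ℓ := ℓ) P u hP' with h | ⟨q, r, hq, hr, hlen, _⟩
  · exact absurd ⟨P, hasPath_mono Hs_subset h, hPL⟩ hC.2.1
  · rcases purge (ℓ := ℓ) r hr with ⟨r', hr1, hr2⟩
    exact ⟨q, r', hq, hr1, by omega⟩

lemma mem_cut_iff {C : Set (V × V)} (hC : IsStretchingCut E ℓ L u v C) (e : V × V) :
    e ∈ C ↔ e ∈ E ∧ e.1 ∈ Vuv E ℓ L u v ∧ e.2 ∈ Vuv E ℓ L u v ∧
      Rch E ℓ L u v C e.1 ∧
      (¬ Rch E ℓ L u v C e.2 ∨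
        dN E ℓ L u v C e.1 + ℓ e < dN E ℓ L u v C e.2) := by
  constructor
  · intro he
    rcases fact3 hC he with ⟨h1, h2, q, r, hq, hr, hlen⟩
    refine ⟨hC.1 he, h1, h2, ⟨q, hq⟩, ?_⟩
    by_contra hcon
    push_neg at hcon
    rcases hcon with ⟨hr2, hd2⟩
    rcases exists_opt hr2 with ⟨p2, hp2, hd2', _⟩
    rcases hasPath_append (ℓ := ℓ) hp2 hr with ⟨hcat, hcatlen⟩
    have hq1 : dN E ℓ L u v C e.1 ≤ pathLen ℓ u q := dN_le hq
    refine hC.2.1 ⟨p2 ++ r, hasPath_mono Hs_subset hcat, ?_⟩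
    omega
  · rintro ⟨heE, h1, h2, ⟨p1, hp1⟩, hor⟩
    by_contra hnc
    have heH : e ∈ Hs E ℓ L u v C := ⟨heE, hnc, h1, h2⟩
    rcases exists_opt (⟨p1, hp1⟩ : Rch E ℓ L u v C e.1) with ⟨q1, hq1, hd1, _⟩
    have hsn := hasPath_snoc (ℓ := ℓ) hq1 (by rwa [Prod.mk.eta])
    rcases hsn with ⟨hw, hwlen⟩
    rcases hor with hor | hor
    · exact hor ⟨_, hw⟩
    · have := dN_le hw
      rw [hwlen, hd1] at this
      have : dN E ℓ L u v C e.2 ≤ dN E ℓ L u v C e.1 + ℓ e := by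
        simpa [Prod.mk.eta] using this
      omega

end StretchAux2

namespace StretchAux2
open StretchAux

variable {V : Type*} {E : Set (V × V)} {ℓ : V × V → ℕ} {L : ℕ} {u v : V}

lemma agree {C C' : Set (V × V)}
    (hpar : ∀ w ∈ Vuv E ℓ L u v,
      par (E := E) (ℓ := ℓ) (L := L) (u := u) (v := v) C w =
      par (E := E) (ℓ := ℓ) (L := L) (u := u) (v := v) C' w) :
    ∀ w ∈ Vuv E ℓ L u v,
      (Rch E ℓ L u v C w ↔ Rch E ℓ L u v C' w) ∧
      (Rch E ℓ L u v C w → dN E ℓ L u v C w = dN E ℓ L u v C' w) := by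
  suffices key : ∀ N w, w ∈ Vuv E ℓ L u v →
      mN E ℓ L u v C w + mN E ℓ L u v C' w ≤ N →
      (Rch E ℓ L u v C w ↔ Rch E ℓ L u v C' w) ∧
      (Rch E ℓ L u v C w → dN E ℓ L u v C w = dN E ℓ L u v C' w) by
    exact fun w hw => key _ w hw le_rfl
  intro N
  induction N with
  | zero =>
    intro w hw hm
    rcases eq_or_ne w u with rfl | hwu
    · exact ⟨⟨fun _ => ⟨[], hasPath_self w⟩, fun _ => ⟨[], hasPath_self w⟩⟩,
        fun _ => by rw [dN_u, dN_u]⟩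
    · constructor
      · constructor
        · intro h
          have h2 := (par_spec h hwu).2.2.2
          omega
        · intro h
          have h2 := (par_spec h hwu).2.2.2
          omega
      · intro h
        have h2 := (par_spec h hwu).2.2.2
        omega
  | succ N ih =>
    intro w hw hm
    rcases eq_or_ne w u with rfl | hwu
    · exact ⟨⟨fun _ => ⟨[], hasPath_self w⟩, fun _ => ⟨[], hasPath_self w⟩⟩,
        fun _ => by rw [dN_u, dN_u]⟩
    · have hiff : Rch E ℓ L u v C w ↔ Rch E ℓ L u v C' w := by
        constructor
        · intro h
          by_contra h'
          have h1 : par (E := E) (ℓ := ℓ) (L := L) (u := u) (v := v) C' w = w :=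
            par_eq_self_iff.mpr (fun hc => h' hc.1)
          have h2 : par (E := E) (ℓ := ℓ) (L := L) (u := u) (v := v) C w ≠ w := by
            intro hc
            exact (par_eq_self_iff.mp hc) ⟨h, hwu⟩
          exact h2 ((hpar w hw).trans h1)
        · intro h
          by_contra h'
          have h1 : par (E := E) (ℓ := ℓ) (L := L) (u := u) (v := v) C w = w :=
            par_eq_self_iff.mpr (fun hc => h' hc.1)
          have h2 : par (E := E) (ℓ := ℓ) (L := L) (u := u) (v := v) C' w ≠ w := by
            intro hc
            exact (par_eq_self_iff.mp hc) ⟨h, hwu⟩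
          exact h2 ((hpar w hw).symm.trans h1)
      refine ⟨hiff, fun h => ?_⟩
      have h' : Rch E ℓ L u v C' w := hiff.mp h
      obtain ⟨hH, hRa, hda, hma⟩ := par_spec (C := C) h hwu
      obtain ⟨hH', hRa', hda', hma'⟩ := par_spec (C := C') h' hwu
      set a := par (E := E) (ℓ := ℓ) (L := L) (u := u) (v := v) C w with ha
      have haa : par (E := E) (ℓ := ℓ) (L := L) (u := u) (v := v) C' w = a :=
        (hpar w hw).symm
      rw [haa] at hH' hRa' hda' hma'
      have haS : a ∈ Vuv E ℓ L u v := hH.2.2.1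
      have := (ih a haS (by omega)).2 hRa
      omega

lemma cut_eq {C C' : Set (V × V)} (hC : IsStretchingCut E ℓ L u v C)
    (hC' : IsStretchingCut E ℓ L u v C')
    (hpar : ∀ w ∈ Vuv E ℓ L u v,
      par (E := E) (ℓ := ℓ) (L := L) (u := u) (v := v) C w =
      par (E := E) (ℓ := ℓ) (L := L) (u := u) (v := v) C' w) :
    C = C' := by
  have hag := agree hpar
  ext e
  rw [mem_cut_iff hC, mem_cut_iff hC']
  constructor
  · rintro ⟨hE, h1, h2, hR, hor⟩
    obtain ⟨hi1, hd1⟩ := hag e.1 h1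
    obtain ⟨hi2, hd2⟩ := hag e.2 h2
    refine ⟨hE, h1, h2, hi1.mp hR, ?_⟩
    rcases hor with hor | hor
    · exact Or.inl (fun hc => hor (hi2.mpr hc))
    · by_cases hR2 : Rch E ℓ L u v C e.2
      · exact Or.inr (by rw [← hd1 hR, ← hd2 hR2]; exact hor)
      · exact Or.inl (fun hc => hR2 (hi2.mpr hc))
  · rintro ⟨hE, h1, h2, hR, hor⟩
    obtain ⟨hi1, hd1⟩ := hag e.1 h1
    obtain ⟨hi2, hd2⟩ := hag e.2 h2
    refine ⟨hE, h1, h2, hi1.mpr hR, ?_⟩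
    rcases hor with hor | hor
    · exact Or.inl (fun hc => hor (hi2.mp hc))
    · by_cases hR2 : Rch E ℓ L u v C e.2
      · exact Or.inr (by rw [hd1 (hi1.mpr hR), hd2 hR2]; exact hor)
      · exact Or.inl hR2
end StretchAux2


/-- For a thin pair `(u,v)` (i.e. `|V_{uv}| ≤ √n` where `n = |V|`), the number
of `u`-`v`-stretching cuts is at most `√n ^ √n`. -/
theorem card_stretching_cuts_of_thin {V : Type*} [Fintype V]
    (E : Set (V × V)) (ℓ : V × V → ℕ) (L : ℕ) (u v : V) (n : ℕ)
    (hn : Fintype.card V = n)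
    (hthin : ((Vuv E ℓ L u v).ncard : ℝ) ≤ Real.sqrt n) :
    (({C : Set (V × V) | IsStretchingCut E ℓ L u v C}).ncard : ℝ) ≤
      Real.sqrt n ^ Real.sqrt n := by
  classical
  set S : Set V := Vuv E ℓ L u v with hS
  set k : ℕ := S.ncard with hk
  -- the parent map as a function on the subtype
  let F : {C : Set (V × V) // IsStretchingCut E ℓ L u v C} → (S → S) :=
    fun C w => ⟨StretchAux2.par (E := E) (ℓ := ℓ) (L := L) (u := u) (v := v) C.1 w.1,
      StretchAux2.par_mem w.2⟩
  have hF : Function.Injective F := by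
    intro C C' h
    refine Subtype.ext (StretchAux2.cut_eq C.2 C'.2 ?_)
    intro w hw
    have := congrFun h ⟨w, hw⟩
    exact congrArg Subtype.val this
  have hcard : ({C : Set (V × V) | IsStretchingCut E ℓ L u v C}).ncard ≤ k ^ k := by
    have h1 : Nat.card {C : Set (V × V) // IsStretchingCut E ℓ L u v C} ≤
        Nat.card (S → S) := Nat.card_le_card_of_injective F hF
    have h2 : Nat.card (S → S) = Nat.card S ^ Nat.card S := Nat.card_fun
    have h3 : Nat.card S = k := Nat.card_coe_set_eq S
    calc ({C : Set (V × V) | IsStretchingCut E ℓ L u v C}).ncard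
        = Nat.card {C : Set (V × V) // IsStretchingCut E ℓ L u v C} :=
          (Nat.card_coe_set_eq _).symm
      _ ≤ Nat.card (S → S) := h1
      _ = k ^ k := by rw [h2, h3]
  have hn1 : 1 ≤ n := by
    rw [← hn]
    exact Fintype.card_pos_iff.mpr ⟨u⟩
  have hs1 : (1:ℝ) ≤ Real.sqrt n := Real.one_le_sqrt.mpr (by exact_mod_cast hn1)
  have hkle : (k:ℝ) ≤ Real.sqrt n := hthin
  calc (({C : Set (V × V) | IsStretchingCut E ℓ L u v C}).ncard : ℝ)
      ≤ ((k ^ k : ℕ) : ℝ) := by exact_mod_cast hcard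
    _ = (k:ℝ) ^ (k:ℝ) := by
        rw [Real.rpow_natCast]
        push_cast
        rfl
    _ ≤ Real.sqrt n ^ (k:ℝ) := Real.rpow_le_rpow (by positivity) hkle (by positivity)
    _ ≤ Real.sqrt n ^ Real.sqrt n :=
        Real.rpow_le_rpow_of_exponent_le hs1 hkle
end

section
/- Let f: ℝ>0 → ℝ>0 be such that x ↦ f(x)/x is decreasing. Suppose an iterative algorithm for covering k terminals works as follows: at each step, given k'' remaining terminals to cover, it finds a subtree covering some j ≥ 1 new terminals at cost at most j·f(k'')·(OPT/k''), where OPT is the cost of an optimal solution covering k'' of the remaining terminals (and OPT never exceeds the optimum for the original instance). Then the total cost of the union of all subtrees is at most g(k)·OPT where g(k) = ∫₀^k (f(x)/x) dx. -/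
open MeasureTheory

/-- Charikar et al.: an iterative algorithm covering `k` terminals in `N`
stages, where stage `t` covers `a t ≥ 1` new terminals at cost
`cst t ≤ a t · f(k'') · OPT / k''` (with `k''` the number of terminals still
to cover before stage `t`), produces a solution of total cost at most
`g(k) · OPT` where `g(k) = ∫₀^k f(x)/x dx`, provided `x ↦ f(x)/x` is
decreasing (and integrable so that `g(k)` is defined). -/
theorem iterative_partial_approximation
    (f : ℝ → ℝ) (hfpos : ∀ x > 0, 0 < f x)
    (hmono : AntitoneOn (fun x => f x / x) (Set.Ioi (0 : ℝ)))
    (k : ℕ) (hk : 0 < k)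
    (hint : IntervalIntegrable (fun x => f x / x) volume 0 (k : ℝ))
    (N : ℕ) (a : ℕ → ℕ) (cst : ℕ → ℝ) (OPT : ℝ) (hOPT : 0 ≤ OPT)
    (ha : ∀ t < N, 1 ≤ a t)
    (htot : ∑ t ∈ Finset.range N, a t = k)
    (hstage : ∀ t < N,
      cst t ≤ (a t : ℝ) *
        f ((k : ℝ) - ∑ s ∈ Finset.range t, (a s : ℝ)) * OPT /
          ((k : ℝ) - ∑ s ∈ Finset.range t, (a s : ℝ))) :
    ∑ t ∈ Finset.range N, cst t ≤ (∫ x in (0 : ℝ)..(k : ℝ), f x / x) * OPT := by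
  set r : ℕ → ℝ := fun t => (k : ℝ) - ∑ s ∈ Finset.range t, (a s : ℝ) with hr
  have hr0 : r 0 = k := by simp [hr]
  have hSN : (∑ s ∈ Finset.range N, (a s : ℝ)) = (k : ℝ) := by
    rw [← Nat.cast_sum, htot]
  have hrN : r N = 0 := by simp [hr, hSN]
  have hstep : ∀ t, r (t + 1) = r t - a t := by
    intro t; simp [hr, Finset.sum_range_succ]; ring
  have hnonneg : ∀ t ≤ N, 0 ≤ r t := by
    intro t ht
    have : (∑ s ∈ Finset.range t, (a s : ℝ)) ≤ ∑ s ∈ Finset.range N, (a s : ℝ) := by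
      apply Finset.sum_le_sum_of_subset_of_nonneg (Finset.range_subset_range.2 ht)
      intro i _ _; positivity
    simp only [hr]; linarith [hSN ▸ this]
  have hlek : ∀ t, r t ≤ k := by
    intro t
    have : (0:ℝ) ≤ ∑ s ∈ Finset.range t, (a s : ℝ) := by positivity
    simp only [hr]; linarith
  have hsub : ∀ u v : ℕ, u ≤ N → v ≤ N →
      IntervalIntegrable (fun x => f x / x) volume (r u) (r v) := by
    intro u v hu hv
    apply hint.mono_set
    have h1 : r u ∈ Set.uIcc (0:ℝ) (k:ℝ) := by
      rw [Set.uIcc_of_le (by positivity)]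
      exact ⟨hnonneg u hu, hlek u⟩
    have h2 : r v ∈ Set.uIcc (0:ℝ) (k:ℝ) := by
      rw [Set.uIcc_of_le (by positivity)]
      exact ⟨hnonneg v hv, hlek v⟩
    exact Set.uIcc_subset_uIcc h1 h2
  have hstage' : ∀ t < N, cst t ≤ (∫ x in r (t+1)..r t, f x / x) * OPT := by
    intro t ht
    have h1 : 0 ≤ r (t+1) := hnonneg _ (by omega)
    have hat : (1:ℝ) ≤ (a t : ℝ) := by exact_mod_cast ha t ht
    have h2 : r (t+1) = r t - a t := hstep t
    have hrt : 0 < r t := by linarith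
    have hle : r (t+1) ≤ r t := by linarith
    have key : (a t : ℝ) * (f (r t) / r t) ≤ ∫ x in r (t+1)..r t, f x / x := by
      rw [intervalIntegral.integral_of_le hle]
      have hconst : (a t : ℝ) * (f (r t) / r t)
          = ∫ x in Set.Ioc (r (t+1)) (r t), (fun _ => f (r t) / r t) x := by
        rw [setIntegral_const, measureReal_def, Real.volume_Ioc, smul_eq_mul,
          ENNReal.toReal_ofReal (by linarith)]
        rw [h2]; ring
      rw [hconst]
      apply setIntegral_mono_on
      · exact integrableOn_const (by rw [Real.volume_Ioc]; exact ENNReal.ofReal_ne_top)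
      · exact (intervalIntegrable_iff_integrableOn_Ioc_of_le hle).1
          (hsub (t+1) t (by omega) (le_of_lt ht))
      · exact measurableSet_Ioc
      · intro x hx
        exact hmono (Set.mem_Ioi.2 (lt_of_le_of_lt h1 hx.1)) (Set.mem_Ioi.2 hrt) hx.2
    calc cst t ≤ (a t : ℝ) * f (r t) * OPT / r t := hstage t ht
      _ = ((a t : ℝ) * (f (r t) / r t)) * OPT := by field_simp
      _ ≤ (∫ x in r (t+1)..r t, f x / x) * OPT := by
          apply mul_le_mul_of_nonneg_right key hOPT
  have main : ∀ n ≤ N, ∑ t ∈ Finset.range n, cst t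
      ≤ (∫ x in r n..r 0, f x / x) * OPT := by
    intro n hn
    induction n with
    | zero => simp
    | succ m ih =>
      have hm : m ≤ N := by omega
      have h1 := ih hm
      have h2 := hstage' m (by omega)
      have hadd : (∫ x in r (m+1)..r m, f x / x) + (∫ x in r m..r 0, f x / x)
          = ∫ x in r (m+1)..r 0, f x / x :=
        intervalIntegral.integral_add_adjacent_intervals
          (hsub (m+1) m (by omega) hm) (hsub m 0 hm (by omega))
      rw [Finset.sum_range_succ, ← hadd]
      linarith [mul_le_mul_of_nonneg_right (le_of_eq (rfl : (∫ x in r (m+1)..r m, f x / x) = _)) hOPT]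
  have := main N le_rfl
  rw [hrN, hr0] at this
  calc ∑ t ∈ Finset.range N, cst t ≤ _ := this
    _ = _ := by norm_num
end

section
/- Let i ≥ 3, and suppose a greedy process covers terminals in stages, where each added subtree has relative cost (cost per newly covered terminal) at most (i−2)·C/k* whenever at least ((i−2)/(i−1))·k* of the k* target terminals remain uncovered and can be covered at total cost at most C. Then at the first moment the process has covered at least k*/(i−1) terminals, the accumulated solution has relative cost at most (i−1)·C/k*. -/
/-- Greedy averaging: stages `t = 0, …, N` cover `a t ≥ 1` terminals at cost
`cst t`; as long as fewer than `k*/(i−1)` terminals are covered (so at least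
`((i−2)/(i−1))·k*` of the `k*` target terminals remain uncovered and coverable
at total cost `C`), each stage has relative cost at most
`(i−2)·C / (((i−2)/(i−1))·k*)`. At the first moment (stage `N`) at which at
least `k*/(i−1)` terminals are covered, the accumulated solution has relative
cost at most `(i−1)·C/k*`. -/
theorem greedy_relative_cost (i : ℕ) (hi : 3 ≤ i)
    (C kstar : ℝ) (hC : 0 < C) (hkstar : 0 < kstar)
    (N : ℕ) (a : ℕ → ℕ) (cst : ℕ → ℝ)
    (ha : ∀ t ≤ N, 1 ≤ a t) (hcst : ∀ t ≤ N, 0 ≤ cst t)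
    (hstage : ∀ t ≤ N,
      (∑ s ∈ Finset.range t, (a s : ℝ)) < kstar / ((i : ℝ) - 1) →
      cst t ≤ (a t : ℝ) *
        (((i : ℝ) - 2) * C / ((((i : ℝ) - 2) / ((i : ℝ) - 1)) * kstar)))
    (hbefore : (∑ s ∈ Finset.range N, (a s : ℝ)) < kstar / ((i : ℝ) - 1))
    (hafter : kstar / ((i : ℝ) - 1) ≤ ∑ s ∈ Finset.range (N + 1), (a s : ℝ)) :
    (∑ t ∈ Finset.range (N + 1), cst t) /
        (∑ t ∈ Finset.range (N + 1), (a t : ℝ)) ≤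
      ((i : ℝ) - 1) * C / kstar := by
  have hi1 : (1:ℝ) ≤ (i:ℝ) - 2 := by
    have : (3:ℝ) ≤ (i:ℝ) := by exact_mod_cast hi
    linarith
  have hαeq : ((i : ℝ) - 2) * C / ((((i : ℝ) - 2) / ((i : ℝ) - 1)) * kstar)
      = ((i : ℝ) - 1) * C / kstar := by
    field_simp
  set α := ((i : ℝ) - 1) * C / kstar with hα
  have hαpos : 0 ≤ α := by
    apply div_nonneg (mul_nonneg (by linarith) hC.le) hkstar.le
  have hprefix : ∀ t ≤ N, (∑ s ∈ Finset.range t, (a s : ℝ)) < kstar / ((i : ℝ) - 1) := by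
    intro t ht
    refine lt_of_le_of_lt ?_ hbefore
    apply Finset.sum_le_sum_of_subset_of_nonneg (Finset.range_subset_range.2 ht)
    intro j _ _; positivity
  have hbound : ∀ t ≤ N, cst t ≤ (a t : ℝ) * α := by
    intro t ht
    have := hstage t ht (hprefix t ht)
    rwa [hαeq] at this
  have hsum : (∑ t ∈ Finset.range (N + 1), cst t)
      ≤ (∑ t ∈ Finset.range (N + 1), (a t : ℝ)) * α := by
    rw [Finset.sum_mul]
    apply Finset.sum_le_sum
    intro t ht
    exact hbound t (Nat.lt_succ_iff.mp (Finset.mem_range.mp ht))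
  have hA : 0 < (∑ t ∈ Finset.range (N + 1), (a t : ℝ)) := by
    refine lt_of_lt_of_le (div_pos hkstar (by linarith)) hafter
  rw [div_le_iff₀ hA]
  linarith [hsum]
end
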